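/- For all k ≥ 1, (Σ_{n≥0} |I_n(3412, δ_{2k})| xⁿ) · p_k(x) = p_{k−1}(x) as formal power series over ℚ, where δ_{2k} = (2k)(2k−1)…21 is the decreasing permutation of length 2k. (Equivalently, F_{2k…21}(x) = U_{k−1}((1−x)/(2x)) / (x·U_k((1−x)/(2x))).) -/

import Mathlib

/-- `π` (a sequence of length `n` with values in `Fin n`) contains the pattern `σ` of length `k`:
there is a strictly increasing choice of positions on which `π` has the same pairwise
comparisons as `σ`. -/
def Contains {n k : ℕ} (π : Fin n → Fin n) (σ : Fin k → Fin k) : Prop :=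
  ∃ f : Fin k → Fin n, StrictMono f ∧ ∀ a b : Fin k, σ a < σ b ↔ π (f a) < π (f b)

/-- `π` avoids the pattern `σ`. -/
def Avoids {n k : ℕ} (π : Fin n → Fin n) (σ : Fin k → Fin k) : Prop :=
  ¬ Contains π σ

/-- The pattern 3412, written 0-indexed. -/
def pat3412 : Fin 4 → Fin 4 := ![2, 3, 0, 1]

/-- The polynomials `p_k` (as power series over `ℚ`): `p_0 = 1`, `p_1 = 1 - x`,
`p_k = (1-x)·p_{k-1} - x²·p_{k-2}`; equivalently `p_k(x) = x^k · U_k((1-x)/(2x))` where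
`U_k` is the `k`-th Chebyshev polynomial of the second kind. -/
noncomputable def pQ : ℕ → PowerSeries ℚ
  | 0 => 1
  | 1 => 1 - PowerSeries.X
  | n + 2 => (1 - PowerSeries.X) * pQ (n + 1) - PowerSeries.X ^ 2 * pQ n

/-- The generating function `F_σ(x) = Σ_{n≥0} |I_n(3412, σ)| xⁿ`, where `I_n(3412, σ)` is the
set of involutions of length `n` avoiding both `3412` and `σ`. -/
noncomputable def F {m : ℕ} (σ : Fin m → Fin m) : PowerSeries ℚ :=
  PowerSeries.mk fun n =>
    (Nat.card {π : Fin n → Fin n //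
      Function.Involutive π ∧ Avoids π pat3412 ∧ Avoids π σ} : ℚ)

namespace Stmt6

lemma contains3412_iff {n : ℕ} (π : Fin n → Fin n) :
    Contains π pat3412 ↔ ∃ a b c d : Fin n, a < b ∧ b < c ∧ c < d ∧
      π c < π d ∧ π d < π a ∧ π a < π b := by
  constructor
  · rintro ⟨f, hf, hiff⟩
    refine ⟨f 0, f 1, f 2, f 3, hf (by decide), hf (by decide), hf (by decide), ?_, ?_, ?_⟩
    · exact (hiff 2 3).mp (by decide)
    · exact (hiff 3 0).mp (by decide)
    · exact (hiff 0 1).mp (by decide)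
  · rintro ⟨a, b, c, d, hab, hbc, hcd, h1, h2, h3⟩
    refine ⟨![a, b, c, d], ?_, ?_⟩
    · intro i j hij
      fin_cases i <;> fin_cases j <;>
        simp_all <;> first
          | exact hab | exact hbc | exact hcd
          | exact hab.trans hbc | exact hbc.trans hcd | exact (hab.trans hbc).trans hcd
          | exact absurd hij (by decide)
    · have v1 : π c < π d := h1
      have v2 : π d < π a := h2
      have v3 : π a < π b := h3
      have ca : π c < π a := v1.trans v2
      have cb : π c < π b := ca.trans v3
      have db : π d < π b := v2.trans v3
      intro i j
      fin_cases i <;> fin_cases j <;>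
        simp [pat3412] <;>
        first
          | exact v1 | exact v2 | exact v3 | exact ca | exact cb | exact db
          | exact v1.le | exact v2.le | exact v3.le | exact ca.le | exact cb.le | exact db.le
          | exact le_refl _ | exact lt_irrefl _
          | (constructor <;> intro h <;> first
              | exact absurd h (by decide)
              | exact absurd h (asymm v1) | exact absurd h (asymm v2) | exact absurd h (asymm v3)
              | exact absurd h (asymm ca) | exact absurd h (asymm cb) | exact absurd h (asymm db)
              | exact v1 | exact v2 | exact v3 | exact ca | exact cb | exact db)

lemma contains_rev_iff_anti {n m : ℕ} (π : Fin n → Fin n) :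
    Contains π (Fin.rev : Fin m → Fin m) ↔
      ∃ f : Fin m → Fin n, StrictMono f ∧ StrictAnti (π ∘ f) := by
  constructor
  · rintro ⟨f, hf, hiff⟩
    exact ⟨f, hf, fun a b hab => (hiff b a).mp (Fin.rev_lt_rev.mpr hab)⟩
  · rintro ⟨f, hf, ha⟩
    refine ⟨f, hf, fun a b => ?_⟩
    rw [Fin.rev_lt_rev]
    exact (ha.lt_iff_gt).symm

lemma contains_of_embed {n m k : ℕ} {π : Fin n → Fin n} {π' : Fin m → Fin m}
    {g : Fin m → Fin n} (hg : StrictMono g)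
    (hc : ∀ a b, π' a < π' b ↔ π (g a) < π (g b)) {σ : Fin k → Fin k} :
    Contains π' σ → Contains π σ := by
  rintro ⟨f, hf, h⟩
  exact ⟨g ∘ f, hg.comp hf, fun a b => (h a b).trans (hc _ _)⟩

/-! ### The block decomposition at `π 0 = M+1` -/

section SpecB

variable {M T : ℕ}

def mid (M T : ℕ) (i : Fin M) : Fin (M + T + 2) := ⟨i + 1, by omega⟩

def tl (M T : ℕ) (i : Fin T) : Fin (M + T + 2) := ⟨i + M + 2, by omega⟩

def c0 (M T : ℕ) : Fin (M + T + 2) := ⟨0, by omega⟩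

def cap (M T : ℕ) : Fin (M + T + 2) := ⟨M + 1, by omega⟩

@[simp] lemma c0_val : (c0 M T : ℕ) = 0 := rfl

@[simp] lemma cap_val : (cap M T : ℕ) = M + 1 := rfl

def SpecB (M T : ℕ) (π : Fin (M + T + 2) → Fin (M + T + 2))
    (μ : Fin M → Fin M) (τ : Fin T → Fin T) : Prop :=
  (π (c0 M T) : ℕ) = M + 1 ∧ (π (cap M T) : ℕ) = 0 ∧
    (∀ x, (π (mid M T x) : ℕ) = μ x + 1) ∧ (∀ x, (π (tl M T x) : ℕ) = τ x + M + 2)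

lemma regionsB (p : Fin (M + T + 2)) :
    p = c0 M T ∨ (∃ x : Fin M, p = mid M T x) ∨ p = cap M T ∨
      ∃ x : Fin T, p = tl M T x := by
  have hp := p.isLt
  rcases Nat.lt_or_ge (p : ℕ) 1 with h | h
  · exact Or.inl (Fin.ext (by simp only [c0_val]; omega))
  rcases Nat.lt_or_ge (p : ℕ) (M + 1) with h2 | h2
  · exact Or.inr (Or.inl ⟨⟨(p : ℕ) - 1, by omega⟩, by simp [mid, Fin.ext_iff]; omega⟩)
  rcases Nat.lt_or_ge (p : ℕ) (M + 2) with h3 | h3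
  · exact Or.inr (Or.inr (Or.inl (Fin.ext (by simp [cap]; omega))))
  · exact Or.inr (Or.inr (Or.inr ⟨⟨(p : ℕ) - M - 2, by omega⟩,
      by simp [tl, Fin.ext_iff]; omega⟩))

variable {π : Fin (M + T + 2) → Fin (M + T + 2)} {μ : Fin M → Fin M} {τ : Fin T → Fin T}

/-- values of `π` at the four kinds of positions, as a usable upper-level fact. -/
lemma valB (h : SpecB M T π μ τ) (p : Fin (M + T + 2)) :
    ((p : ℕ) = 0 ∧ (π p : ℕ) = M + 1) ∨
    (1 ≤ (p : ℕ) ∧ (p : ℕ) ≤ M ∧ 1 ≤ (π p : ℕ) ∧ (π p : ℕ) ≤ M) ∨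
    ((p : ℕ) = M + 1 ∧ (π p : ℕ) = 0) ∨
    (M + 2 ≤ (p : ℕ) ∧ M + 2 ≤ (π p : ℕ)) := by
  obtain ⟨h0, hc, hm, ht⟩ := h
  rcases regionsB p with rfl | ⟨x, rfl⟩ | rfl | ⟨x, rfl⟩
  · exact Or.inl ⟨rfl, h0⟩
  · right; left
    have := hm x
    have := x.isLt
    exact ⟨by simp [mid], by simp [mid], by omega, by have := (μ x).isLt; omega⟩
  · exact Or.inr (Or.inr (Or.inl ⟨rfl, hc⟩))
  · right; right; right
    have := ht x
    exact ⟨by simp [tl], by omega⟩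

lemma mid_lt_mid {x y : Fin M} : mid M T x < mid M T y ↔ x < y := by
  rw [Fin.lt_def, Fin.lt_def]; simp [mid]

lemma tl_lt_tl {x y : Fin T} : tl M T x < tl M T y ↔ x < y := by
  rw [Fin.lt_def, Fin.lt_def]; simp [tl]

lemma exists_mid (p : Fin (M + T + 2)) (h1 : 1 ≤ (p : ℕ)) (h2 : (p : ℕ) ≤ M) :
    ∃ x, p = mid M T x :=
  ⟨⟨(p : ℕ) - 1, by omega⟩, Fin.ext (by simp [mid]; omega)⟩

lemma exists_tl (p : Fin (M + T + 2)) (h1 : M + 2 ≤ (p : ℕ)) :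
    ∃ x, p = tl M T x :=
  ⟨⟨(p : ℕ) - M - 2, by have := p.isLt; omega⟩, Fin.ext (by simp [tl]; omega)⟩

lemma specB_contains3412 (h : SpecB M T π μ τ) :
    Contains π pat3412 ↔ Contains μ pat3412 ∨ Contains τ pat3412 := by
  obtain ⟨h0, hc, hm, ht⟩ := h
  constructor
  · rw [contains3412_iff]
    rintro ⟨a, b, c, d, hab, hbc, hcd, v1, v2, v3⟩
    have hab' := Fin.lt_def.mp hab
    have hbc' := Fin.lt_def.mp hbc
    have hcd' := Fin.lt_def.mp hcd
    have v1' := Fin.lt_def.mp v1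
    have v2' := Fin.lt_def.mp v2
    have v3' := Fin.lt_def.mp v3
    have Ha := valB ⟨h0, hc, hm, ht⟩ a
    have Hb := valB ⟨h0, hc, hm, ht⟩ b
    have Hc := valB ⟨h0, hc, hm, ht⟩ c
    have Hd := valB ⟨h0, hc, hm, ht⟩ d
    have key : (1 ≤ (a : ℕ) ∧ (d : ℕ) ≤ M) ∨ (M + 2 ≤ (a : ℕ)) := by omega
    clear Ha Hb Hc Hd v1 v2 v3 hab hbc hcd
    have hd := d.isLt
    rcases key with ⟨ha1, hd1⟩ | ha1
    · left
      rw [contains3412_iff]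
      obtain ⟨xa, rfl⟩ := exists_mid a (by omega) (by omega)
      obtain ⟨xb, rfl⟩ := exists_mid b (by omega) (by omega)
      obtain ⟨xc, rfl⟩ := exists_mid c (by omega) (by omega)
      obtain ⟨xd, rfl⟩ := exists_mid d (by omega) (by omega)
      have e1 := hm xa; have e2 := hm xb; have e3 := hm xc; have e4 := hm xd
      simp only [mid] at hab' hbc' hcd'
      exact ⟨xa, xb, xc, xd, Fin.lt_def.mpr (by omega), Fin.lt_def.mpr (by omega),
        Fin.lt_def.mpr (by omega), Fin.lt_def.mpr (by omega), Fin.lt_def.mpr (by omega),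
        Fin.lt_def.mpr (by omega)⟩
    · right
      rw [contains3412_iff]
      obtain ⟨xa, rfl⟩ := exists_tl a (by omega)
      obtain ⟨xb, rfl⟩ := exists_tl b (by omega)
      obtain ⟨xc, rfl⟩ := exists_tl c (by omega)
      obtain ⟨xd, rfl⟩ := exists_tl d (by omega)
      have e1 := ht xa; have e2 := ht xb; have e3 := ht xc; have e4 := ht xd
      simp only [tl] at hab' hbc' hcd'
      exact ⟨xa, xb, xc, xd, Fin.lt_def.mpr (by omega), Fin.lt_def.mpr (by omega),
        Fin.lt_def.mpr (by omega), Fin.lt_def.mpr (by omega), Fin.lt_def.mpr (by omega),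
        Fin.lt_def.mpr (by omega)⟩
  · rintro (hμ | hτ)
    · refine contains_of_embed (g := mid M T) (fun x y hxy => mid_lt_mid.mpr hxy) ?_ hμ
      intro x y
      have := hm x; have := hm y
      rw [Fin.lt_def, Fin.lt_def]
      omega
    · refine contains_of_embed (g := tl M T) (fun x y hxy => tl_lt_tl.mpr hxy) ?_ hτ
      intro x y
      have := ht x; have := ht y
      rw [Fin.lt_def, Fin.lt_def]
      omega

lemma specB_contains_rev {k : ℕ} (h : SpecB M T π μ τ) :
    Contains π (Fin.rev : Fin (2 * (k + 1)) → Fin (2 * (k + 1))) ↔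
      Contains μ (Fin.rev : Fin (2 * k) → Fin (2 * k)) ∨
      Contains τ (Fin.rev : Fin (2 * (k + 1)) → Fin (2 * (k + 1))) := by
  obtain ⟨h0, hc, hm, ht⟩ := h
  constructor
  · rw [contains_rev_iff_anti]
    rintro ⟨f, hf, ha⟩
    by_cases htl : ∃ j : Fin (2 * (k + 1)), M + 2 ≤ (f j : ℕ)
    · -- all positions are in the tail block
      right
      obtain ⟨j0, hj0⟩ := htl
      have hall : ∀ j, M + 2 ≤ (f j : ℕ) := by
        intro j
        rcases lt_trichotomy j j0 with hj | rfl | hj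
        · -- value of π at f j exceeds value at f j0, which is ≥ M+2
          have hv : π (f j0) < π (f j) := ha hj
          have Hj0 := valB ⟨h0, hc, hm, ht⟩ (f j0)
          have Hj := valB ⟨h0, hc, hm, ht⟩ (f j)
          rw [Fin.lt_def] at hv
          omega
        · exact hj0
        · have := Fin.lt_def.mp (hf hj)
          omega
      rw [contains_rev_iff_anti]
      have hrange : ∀ j, ∃ x, f j = tl M T x := fun j => exists_tl (f j) (hall j)
      choose g hg using hrange
      refine ⟨g, ?_, ?_⟩
      · intro x y hxy
        have := hf hxy
        rw [hg x, hg y] at this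
        exact tl_lt_tl.mp this
      · intro x y hxy
        have := ha hxy
        simp only [Function.comp] at this
        rw [hg x, hg y] at this
        have e1 := ht (g x); have e2 := ht (g y)
        rw [Fin.lt_def] at this
        simp only [Function.comp]
        rw [Fin.lt_def]
        omega
    · -- no position in the tail block: the middle 2k positions are in the middle block
      left
      push_neg at htl
      have hmidrange : ∀ i : Fin (2 * k), ∃ x : Fin M,
          f ⟨(i : ℕ) + 1, by omega⟩ = mid M T x := by
        intro i
        set j : Fin (2 * (k + 1)) := ⟨(i : ℕ) + 1, by omega⟩ with hj
        have hpos : 1 ≤ (f j : ℕ) := by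
          have h01 : f ⟨0, by omega⟩ < f j := hf (by rw [Fin.lt_def]; simp [hj])
          have := Fin.lt_def.mp h01
          omega
        have hne : (f j : ℕ) ≠ M + 1 := by
          intro hEq
          -- the value at position M+1 is 0, but there is a later, smaller value
          have hlast : π (f j) > π (f ⟨2 * (k + 1) - 1, by omega⟩) := by
            apply ha
            rw [Fin.lt_def]
            simp [hj]
            omega
          have hfj : f j = cap M T := Fin.ext hEq
          rw [hfj] at hlast
          have := Fin.lt_def.mp hlast
          have hcv := hc
          omega
        exact exists_mid _ hpos (by have := htl j; omega)
      choose g hg using hmidrange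
      rw [contains_rev_iff_anti]
      refine ⟨g, ?_, ?_⟩
      · intro x y hxy
        have hlt : (⟨(x : ℕ) + 1, by omega⟩ : Fin (2 * (k + 1))) < ⟨(y : ℕ) + 1, by omega⟩ := by
          rw [Fin.lt_def]; exact Nat.add_lt_add_right (Fin.lt_def.mp hxy) 1
        have := hf hlt
        rw [hg x, hg y] at this
        exact mid_lt_mid.mp this
      · intro x y hxy
        have hlt : (⟨(x : ℕ) + 1, by omega⟩ : Fin (2 * (k + 1))) < ⟨(y : ℕ) + 1, by omega⟩ := by
          rw [Fin.lt_def]; exact Nat.add_lt_add_right (Fin.lt_def.mp hxy) 1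
        have := ha hlt
        simp only [Function.comp] at this
        rw [hg x, hg y] at this
        have e1 := hm (g x); have e2 := hm (g y)
        rw [Fin.lt_def] at this
        simp only [Function.comp]
        rw [Fin.lt_def]
        omega
  · rintro (hμ | hτ)
    · -- extend a decreasing sequence of μ by the two cap positions
      rw [contains_rev_iff_anti] at hμ ⊢
      obtain ⟨f, hf, ha⟩ := hμ
      refine ⟨fun j => if h1 : (j : ℕ) = 0 then c0 M T
        else if h2 : (j : ℕ) ≤ 2 * k then mid M T (f ⟨(j : ℕ) - 1, by omega⟩)
        else cap M T, ?_, ?_⟩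
      · intro x y hxy
        have hxy' := Fin.lt_def.mp hxy
        have hyb := y.isLt
        rcases Nat.eq_zero_or_pos (x : ℕ) with hx0 | hx0
        · rcases Nat.lt_or_ge (y : ℕ) (2 * k + 1) with hy | hy
          · simp only [dif_pos hx0, dif_neg (by omega : ¬ ((y : ℕ) = 0)),
              dif_pos (by omega : (y : ℕ) ≤ 2 * k)]
            rw [Fin.lt_def]
            simp [mid, c0]
          · simp only [dif_pos hx0, dif_neg (by omega : ¬ ((y : ℕ) = 0)),
              dif_neg (by omega : ¬ ((y : ℕ) ≤ 2 * k))]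
            rw [Fin.lt_def]
            simp [c0, cap]
        · rcases Nat.lt_or_ge (y : ℕ) (2 * k + 1) with hy | hy
          · simp only [dif_neg (by omega : ¬ ((x : ℕ) = 0)),
              dif_neg (by omega : ¬ ((y : ℕ) = 0)),
              dif_pos (by omega : (x : ℕ) ≤ 2 * k), dif_pos (by omega : (y : ℕ) ≤ 2 * k)]
            rw [mid_lt_mid]
            exact hf (by rw [Fin.lt_def]; simp; omega)
          · simp only [dif_neg (by omega : ¬ ((x : ℕ) = 0)),
              dif_neg (by omega : ¬ ((y : ℕ) = 0)),
              dif_pos (by omega : (x : ℕ) ≤ 2 * k), dif_neg (by omega : ¬ ((y : ℕ) ≤ 2 * k))]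
            rw [Fin.lt_def]
            have := (f ⟨(x : ℕ) - 1, by omega⟩).isLt
            simp only [mid, cap_val]
            omega
      · intro x y hxy
        have hxy' := Fin.lt_def.mp hxy
        have hyb := y.isLt
        simp only [Function.comp]
        rcases Nat.eq_zero_or_pos (x : ℕ) with hx0 | hx0
        · rcases Nat.lt_or_ge (y : ℕ) (2 * k + 1) with hy | hy
          · simp only [dif_pos hx0, dif_neg (by omega : ¬ ((y : ℕ) = 0)),
              dif_pos (by omega : (y : ℕ) ≤ 2 * k)]
            have e := hm (f ⟨(y : ℕ) - 1, by omega⟩)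
            have := (μ (f ⟨(y : ℕ) - 1, by omega⟩)).isLt
            rw [Fin.lt_def]
            have hval : (π (c0 M T) : ℕ) = M + 1 := h0
            omega
          · simp only [dif_pos hx0, dif_neg (by omega : ¬ ((y : ℕ) = 0)),
              dif_neg (by omega : ¬ ((y : ℕ) ≤ 2 * k))]
            rw [Fin.lt_def]
            omega
        · rcases Nat.lt_or_ge (y : ℕ) (2 * k + 1) with hy | hy
          · simp only [dif_neg (by omega : ¬ ((x : ℕ) = 0)),
              dif_neg (by omega : ¬ ((y : ℕ) = 0)),
              dif_pos (by omega : (x : ℕ) ≤ 2 * k), dif_pos (by omega : (y : ℕ) ≤ 2 * k)]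
            have e1 := hm (f ⟨(x : ℕ) - 1, by omega⟩)
            have e2 := hm (f ⟨(y : ℕ) - 1, by omega⟩)
            have hmm : μ (f ⟨(y : ℕ) - 1, by omega⟩) < μ (f ⟨(x : ℕ) - 1, by omega⟩) := by
              have := ha (show (⟨(x : ℕ) - 1, by omega⟩ : Fin (2 * k)) <
                ⟨(y : ℕ) - 1, by omega⟩ by rw [Fin.lt_def]; simp; omega)
              simpa using this
            rw [Fin.lt_def]
            have := Fin.lt_def.mp hmm
            omega
          · simp only [dif_neg (by omega : ¬ ((x : ℕ) = 0)),
              dif_neg (by omega : ¬ ((y : ℕ) = 0)),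
              dif_pos (by omega : (x : ℕ) ≤ 2 * k), dif_neg (by omega : ¬ ((y : ℕ) ≤ 2 * k))]
            have e1 := hm (f ⟨(x : ℕ) - 1, by omega⟩)
            rw [Fin.lt_def]
            omega
    · exact contains_of_embed (fun x y hxy => tl_lt_tl.mpr hxy)
        (fun x y => by have := ht x; have := ht y; rw [Fin.lt_def, Fin.lt_def]; omega) hτ

lemma specB_involutive (h : SpecB M T π μ τ) (hμ : Function.Involutive μ)
    (hτ : Function.Involutive τ) : Function.Involutive π := by
  obtain ⟨h0, hc, hm, ht⟩ := h
  have e0 : π (c0 M T) = cap M T := Fin.ext (by rw [h0, cap_val])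
  have ec : π (cap M T) = c0 M T := Fin.ext (by rw [hc, c0_val])
  have em : ∀ x, π (mid M T x) = mid M T (μ x) := by
    intro x
    apply Fin.ext
    rw [hm x]
    simp [mid]
  have et : ∀ x, π (tl M T x) = tl M T (τ x) := by
    intro x
    apply Fin.ext
    rw [ht x]
    simp only [tl]
  intro p
  rcases regionsB p with rfl | ⟨x, rfl⟩ | rfl | ⟨x, rfl⟩
  · rw [e0, ec]
  · rw [em, em, hμ]
  · rw [ec, e0]
  · rw [et, et, hτ]

lemma specB_involutive' (h : SpecB M T π μ τ) (hπ : Function.Involutive π) :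
    Function.Involutive μ ∧ Function.Involutive τ := by
  obtain ⟨h0, hc, hm, ht⟩ := h
  constructor
  · intro x
    have em : π (mid M T x) = mid M T (μ x) := by
      apply Fin.ext
      rw [hm x]
      simp [mid]
    have := hπ (mid M T x)
    rw [em, (by apply Fin.ext; rw [hm (μ x)]; simp [mid] : π (mid M T (μ x)) = mid M T (μ (μ x)))] at this
    have := congrArg Fin.val this
    simp [mid] at this
    exact Fin.ext this
  · intro x
    have et : π (tl M T x) = tl M T (τ x) := by
      apply Fin.ext
      rw [ht x]
      simp [tl]
    have := hπ (tl M T x)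
    rw [et, (by apply Fin.ext; rw [ht (τ x)]; simp [tl] : π (tl M T (τ x)) = tl M T (τ (τ x)))] at this
    have := congrArg Fin.val this
    simp [tl] at this
    exact Fin.ext this

end SpecB

/-! ### The decomposition at `π 0 = 0` -/

section Spec0

variable {N : ℕ}

def Spec0 (N : ℕ) (π : Fin (N + 1) → Fin (N + 1)) (ρ : Fin N → Fin N) : Prop :=
  (π 0 : ℕ) = 0 ∧ ∀ x : Fin N, (π x.succ : ℕ) = ρ x + 1

variable {π : Fin (N + 1) → Fin (N + 1)} {ρ : Fin N → Fin N}

lemma regions0 (p : Fin (N + 1)) : p = 0 ∨ ∃ x : Fin N, p = x.succ := by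
  rcases Nat.eq_zero_or_pos (p : ℕ) with h | h
  · exact Or.inl (Fin.ext h)
  · exact Or.inr ⟨⟨(p : ℕ) - 1, by have := p.isLt; omega⟩, Fin.ext (by simp; omega)⟩

lemma val0 (h : Spec0 N π ρ) (p : Fin (N + 1)) :
    ((p : ℕ) = 0 ∧ (π p : ℕ) = 0) ∨ (1 ≤ (p : ℕ) ∧ 1 ≤ (π p : ℕ)) := by
  obtain ⟨h0, hs⟩ := h
  rcases regions0 p with rfl | ⟨x, rfl⟩
  · exact Or.inl ⟨rfl, h0⟩
  · right
    have := hs x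
    constructor
    · simp
    · omega

lemma spec0_contains3412 (h : Spec0 N π ρ) :
    Contains π pat3412 ↔ Contains ρ pat3412 := by
  obtain ⟨h0, hs⟩ := h
  constructor
  · rw [contains3412_iff]
    rintro ⟨a, b, c, d, hab, hbc, hcd, v1, v2, v3⟩
    have hab' := Fin.lt_def.mp hab
    have hbc' := Fin.lt_def.mp hbc
    have hcd' := Fin.lt_def.mp hcd
    have v1' := Fin.lt_def.mp v1
    have v2' := Fin.lt_def.mp v2
    have v3' := Fin.lt_def.mp v3
    have Ha := val0 ⟨h0, hs⟩ a
    have Hd := val0 ⟨h0, hs⟩ d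
    have ha1 : 1 ≤ (a : ℕ) := by omega
    rcases regions0 a with rfl | ⟨xa, rfl⟩
    · simp at ha1
    obtain ⟨xb, rfl⟩ := (regions0 b).resolve_left (by rintro rfl; simp at hab')
    obtain ⟨xc, rfl⟩ := (regions0 c).resolve_left (by rintro rfl; simp at hbc')
    obtain ⟨xd, rfl⟩ := (regions0 d).resolve_left (by rintro rfl; simp at hcd')
    have e1 := hs xa; have e2 := hs xb; have e3 := hs xc; have e4 := hs xd
    simp only [Fin.val_succ] at hab' hbc' hcd'
    rw [contains3412_iff]
    exact ⟨xa, xb, xc, xd, Fin.lt_def.mpr (by omega), Fin.lt_def.mpr (by omega),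
      Fin.lt_def.mpr (by omega), Fin.lt_def.mpr (by omega), Fin.lt_def.mpr (by omega),
      Fin.lt_def.mpr (by omega)⟩
  · refine fun hρ => contains_of_embed (g := Fin.succ) (fun x y hxy => Fin.succ_lt_succ_iff.mpr hxy) ?_ hρ
    intro x y
    have := hs x; have := hs y
    rw [Fin.lt_def, Fin.lt_def]
    omega

lemma spec0_contains_rev {k : ℕ} (h : Spec0 N π ρ) :
    Contains π (Fin.rev : Fin (2 * k) → Fin (2 * k)) ↔
      Contains ρ (Fin.rev : Fin (2 * k) → Fin (2 * k)) := by
  obtain ⟨h0, hs⟩ := h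
  constructor
  · rw [contains_rev_iff_anti, contains_rev_iff_anti]
    rintro ⟨f, hf, ha⟩
    rcases Nat.eq_zero_or_pos k with rfl | hk
    · exact ⟨fun i => absurd i.isLt (by omega), fun a b _ => absurd a.isLt (by omega),
        fun a b _ => absurd a.isLt (by omega)⟩
    have hne : ∀ j, 1 ≤ (f j : ℕ) := by
      intro j
      by_contra hcon
      have hfj : (f j : ℕ) = 0 := by omega
      rcases Nat.lt_or_ge (j : ℕ) (2 * k - 1) with hj | hj
      · have hlt : j < (⟨2 * k - 1, by omega⟩ : Fin (2 * k)) :=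
          Fin.lt_def.mpr (show (j : ℕ) < 2 * k - 1 by omega)
        have := ha hlt
        simp only [Function.comp_apply] at this
        rw [show f j = (0 : Fin (N + 1)) from Fin.ext (by simpa using hfj)] at this
        have hv := Fin.lt_def.mp this
        omega
      · have hlt : (⟨0, by omega⟩ : Fin (2 * k)) < j :=
          Fin.lt_def.mpr (show 0 < (j : ℕ) by omega)
        have hv := Fin.lt_def.mp (hf hlt)
        have hlow : (f ⟨0, by omega⟩ : ℕ) ≥ 0 := Nat.zero_le _
        omega
    have hub : ∀ j, (f j : ℕ) - 1 < N := fun j => by have := (f j).isLt; have := hne j; omega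
    set g : Fin (2 * k) → Fin N := fun j => ⟨(f j : ℕ) - 1, hub j⟩ with hg
    have e : ∀ j, (π (f j) : ℕ) = ρ (g j) + 1 := by
      intro j
      have := hs (g j)
      have hnej := hne j
      rw [show (g j).succ = f j from Fin.ext (by simp [hg]; omega)] at this
      exact this
    refine ⟨g, ?_, ?_⟩
    · intro x y hxy
      have := Fin.lt_def.mp (hf hxy)
      rw [Fin.lt_def]
      simp only [hg]
      have := hne x
      omega
    · intro x y hxy
      have hv := Fin.lt_def.mp (ha hxy)
      simp only [Function.comp_apply] at hv ⊢
      rw [Fin.lt_def]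
      have := e x; have := e y
      omega
  · refine fun hρ => contains_of_embed (g := Fin.succ) (fun x y hxy => Fin.succ_lt_succ_iff.mpr hxy) ?_ hρ
    intro x y
    have := hs x; have := hs y
    rw [Fin.lt_def, Fin.lt_def]
    omega

lemma spec0_involutive (h : Spec0 N π ρ) (hρ : Function.Involutive ρ) :
    Function.Involutive π := by
  obtain ⟨h0, hs⟩ := h
  have e0 : π 0 = 0 := Fin.ext (by simpa using h0)
  have es : ∀ x, π x.succ = (ρ x).succ := fun x => Fin.ext (by rw [hs x]; simp)
  intro p
  rcases regions0 p with rfl | ⟨x, rfl⟩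
  · rw [e0, e0]
  · rw [es, es, hρ]

lemma spec0_involutive' (h : Spec0 N π ρ) (hπ : Function.Involutive π) :
    Function.Involutive ρ := by
  obtain ⟨h0, hs⟩ := h
  have es : ∀ x, π x.succ = (ρ x).succ := fun x => Fin.ext (by rw [hs x]; simp)
  intro x
  have := hπ x.succ
  rw [es, es] at this
  exact Fin.succ_injective _ this

end Spec0

/-! ### Constructions -/

section Constr

variable {M T N : ℕ}

def midOf (M T : ℕ) (π : Fin (M + T + 2) → Fin (M + T + 2)) : Fin M → Fin M :=
  fun i => if h : (π (mid M T i) : ℕ) - 1 < M then ⟨(π (mid M T i) : ℕ) - 1, h⟩ else i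

def tlOf (M T : ℕ) (π : Fin (M + T + 2) → Fin (M + T + 2)) : Fin T → Fin T :=
  fun i => if h : (π (tl M T i) : ℕ) - (M + 2) < T then ⟨(π (tl M T i) : ℕ) - (M + 2), h⟩ else i

def glueB (M T : ℕ) (μ : Fin M → Fin M) (τ : Fin T → Fin T) :
    Fin (M + T + 2) → Fin (M + T + 2) := fun p =>
  if h1 : (p : ℕ) = 0 then cap M T
  else if h2 : (p : ℕ) ≤ M then mid M T (μ ⟨(p : ℕ) - 1, by omega⟩)
  else if h3 : (p : ℕ) = M + 1 then c0 M T
  else tl M T (τ ⟨(p : ℕ) - M - 2, by have := p.isLt; omega⟩)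

lemma specB_glue (μ : Fin M → Fin M) (τ : Fin T → Fin T) :
    SpecB M T (glueB M T μ τ) μ τ := by
  refine ⟨?_, ?_, ?_, ?_⟩
  · rw [glueB, dif_pos c0_val]; exact cap_val
  · rw [glueB, dif_neg (by simp), dif_neg (by simp), dif_pos cap_val]; exact c0_val
  · intro x
    have hx := x.isLt
    rw [glueB, dif_neg (by simp [mid]), dif_pos (by simp [mid]; try omega)]
    rw [show (⟨((mid M T x : Fin (M + T + 2)) : ℕ) - 1, by simp [mid]; try omega⟩ : Fin M) = x from
      Fin.ext (by simp [mid])]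
    simp [mid]
  · intro x
    have hx := x.isLt
    rw [glueB, dif_neg (by simp [tl]; try omega), dif_neg (by simp [tl]; try omega),
      dif_neg (by simp [tl]; try omega)]
    rw [show (⟨((tl M T x : Fin (M + T + 2)) : ℕ) - M - 2, by simp [tl]; try omega⟩ : Fin T) = x from
      Fin.ext (by simp [tl]; try omega)]
    simp [tl]
    try omega

lemma midOf_eq {π μ τ} (h : SpecB M T π μ τ) : midOf M T π = μ := by
  funext x
  have hv := h.2.2.1 x
  have hb := (μ x).isLt
  rw [midOf, dif_pos (by omega)]
  exact Fin.ext (by simp; omega)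

lemma tlOf_eq {π μ τ} (h : SpecB M T π μ τ) : tlOf M T π = τ := by
  funext x
  have hv := h.2.2.2 x
  have hb := (τ x).isLt
  rw [tlOf, dif_pos (by omega)]
  exact Fin.ext (by simp; omega)

lemma specB_unique {π π' μ τ} (h : SpecB M T π μ τ) (h' : SpecB M T π' μ τ) : π = π' := by
  funext p
  rcases regionsB p with rfl | ⟨x, rfl⟩ | rfl | ⟨x, rfl⟩
  · exact Fin.ext (by rw [h.1, h'.1])
  · exact Fin.ext (by rw [h.2.2.1, h'.2.2.1])
  · exact Fin.ext (by rw [h.2.1, h'.2.1])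
  · exact Fin.ext (by rw [h.2.2.2, h'.2.2.2])

/-- From an involutive 3412-avoiding `π` with `π 0 = M+1`, the spec holds with the
extracted middle and tail blocks. -/
lemma specB_of (π : Fin (M + T + 2) → Fin (M + T + 2)) (hinv : Function.Involutive π)
    (h34 : Avoids π pat3412) (h0 : (π (c0 M T) : ℕ) = M + 1) :
    SpecB M T π (midOf M T π) (tlOf M T π) := by
  have e0 : π (c0 M T) = cap M T := Fin.ext (by rw [h0, cap_val])
  have ec : π (cap M T) = c0 M T := by
    have := hinv (c0 M T)
    rw [e0] at this
    exact this
  have hmid : ∀ x : Fin M, 1 ≤ (π (mid M T x) : ℕ) ∧ (π (mid M T x) : ℕ) ≤ M := by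
    intro x
    have hx := x.isLt
    have hne0 : (π (mid M T x) : ℕ) ≠ 0 := by
      intro hv
      have : π (mid M T x) = c0 M T := Fin.ext (by rw [hv, c0_val])
      have := hinv.injective (this.trans ec.symm)
      have := congrArg Fin.val this
      simp [mid, cap] at this
      omega
    have hnec : (π (mid M T x) : ℕ) ≠ M + 1 := by
      intro hv
      have : π (mid M T x) = cap M T := Fin.ext (by rw [hv, cap_val])
      have := hinv.injective (this.trans e0.symm)
      have := congrArg Fin.val this
      simp [mid, c0] at this
    by_contra hcon
    push_neg at hcon
    have hbig : M + 2 ≤ (π (mid M T x) : ℕ) := by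
      rcases Nat.lt_or_ge (π (mid M T x) : ℕ) (M + 2) with h | h
      · omega
      · exact h
    apply h34
    rw [contains3412_iff]
    refine ⟨c0 M T, mid M T x, cap M T, π (mid M T x), ?_, ?_, ?_, ?_, ?_, ?_⟩
    · rw [Fin.lt_def]; simp [mid, c0]
    · rw [Fin.lt_def]; simp [mid, cap]; try omega
    · rw [Fin.lt_def]; simp [cap]; try omega
    · rw [ec, hinv (mid M T x), Fin.lt_def]; simp [mid, c0]
    · rw [hinv (mid M T x), e0, Fin.lt_def]; simp [mid, cap]; try omega
    · rw [e0, Fin.lt_def]; simp [cap]; try omega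
  have htl : ∀ x : Fin T, M + 2 ≤ (π (tl M T x) : ℕ) := by
    intro x
    have hx := x.isLt
    have hne0 : (π (tl M T x) : ℕ) ≠ 0 := by
      intro hv
      have : π (tl M T x) = c0 M T := Fin.ext (by rw [hv, c0_val])
      have := hinv.injective (this.trans ec.symm)
      have := congrArg Fin.val this
      simp [tl, cap] at this
      omega
    have hnec : (π (tl M T x) : ℕ) ≠ M + 1 := by
      intro hv
      have : π (tl M T x) = cap M T := Fin.ext (by rw [hv, cap_val])
      have := hinv.injective (this.trans e0.symm)
      have := congrArg Fin.val this
      simp [tl, c0] at this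
      try omega
    by_contra hcon
    push_neg at hcon
    have hin : 1 ≤ (π (tl M T x) : ℕ) ∧ (π (tl M T x) : ℕ) ≤ M := by omega
    obtain ⟨y, hy⟩ := exists_mid (π (tl M T x)) hin.1 hin.2
    have : π (mid M T y) = tl M T x := by rw [← hy, hinv]
    have hval := (hmid y).2
    rw [this] at hval
    simp [tl] at hval
    omega
  refine ⟨h0, by rw [ec, c0_val], ?_, ?_⟩
  · intro x
    have := hmid x
    rw [midOf, dif_pos (by omega)]
    simp
    omega
  · intro x
    have h1 := htl x
    have h2 := (π (tl M T x)).isLt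
    rw [tlOf, dif_pos (by omega)]
    simp
    omega

def rhoOf (N : ℕ) (π : Fin (N + 1) → Fin (N + 1)) : Fin N → Fin N :=
  fun i => if h : (π i.succ : ℕ) - 1 < N then ⟨(π i.succ : ℕ) - 1, h⟩ else i

def glue0 (N : ℕ) (ρ : Fin N → Fin N) : Fin (N + 1) → Fin (N + 1) := fun p =>
  if h1 : (p : ℕ) = 0 then 0 else (ρ ⟨(p : ℕ) - 1, by have := p.isLt; omega⟩).succ

lemma spec0_glue (ρ : Fin N → Fin N) : Spec0 N (glue0 N ρ) ρ := by
  constructor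
  · rw [glue0, dif_pos (by simp)]; simp
  · intro x
    rw [glue0, dif_neg (by simp)]
    rw [show (⟨((x.succ : Fin (N + 1)) : ℕ) - 1, by simp⟩ : Fin N) = x from Fin.ext (by simp)]
    simp

lemma rhoOf_eq {π ρ} (h : Spec0 N π ρ) : rhoOf N π = ρ := by
  funext x
  have hv := h.2 x
  have hb := (ρ x).isLt
  rw [rhoOf, dif_pos (by omega)]
  exact Fin.ext (by simp; omega)

lemma spec0_unique {π π' : Fin (N + 1) → Fin (N + 1)} {ρ} (h : Spec0 N π ρ)
    (h' : Spec0 N π' ρ) : π = π' := by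
  funext p
  rcases regions0 p with rfl | ⟨x, rfl⟩
  · exact Fin.ext (by rw [h.1, h'.1])
  · exact Fin.ext (by rw [h.2, h'.2])

lemma spec0_of (π : Fin (N + 1) → Fin (N + 1)) (hinv : Function.Involutive π)
    (h0 : (π 0 : ℕ) = 0) : Spec0 N π (rhoOf N π) := by
  have e0 : π 0 = 0 := Fin.ext (by simpa using h0)
  refine ⟨h0, ?_⟩
  intro x
  have hne0 : (π x.succ : ℕ) ≠ 0 := by
    intro hv
    have : π x.succ = 0 := Fin.ext (by simpa using hv)
    have := hinv.injective (this.trans e0.symm)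
    exact Fin.succ_ne_zero x this
  have hb := (π x.succ).isLt
  rw [rhoOf, dif_pos (by omega)]
  simp
  omega

end Constr

/-! ### Counting -/

def IA (k n : ℕ) (π : Fin n → Fin n) : Prop :=
  Function.Involutive π ∧ Avoids π pat3412 ∧
    Avoids π (Fin.rev : Fin (2 * k) → Fin (2 * k))

noncomputable def cA (k n : ℕ) : ℕ := Nat.card {π : Fin n → Fin n // IA k n π}

def equivB (k M T : ℕ) :
    {π : Fin (M + T + 2) → Fin (M + T + 2) //
      (IA (k + 1) (M + T + 2) π) ∧ (π (c0 M T) : ℕ) = M + 1} ≃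
      {μ : Fin M → Fin M // IA k M μ} × {τ : Fin T → Fin T // IA (k + 1) T τ} where
  toFun := fun s =>
    have S := specB_of s.1 s.2.1.1 s.2.1.2.1 s.2.2
    (⟨midOf M T s.1, (specB_involutive' S s.2.1.1).1,
       fun hμ => s.2.1.2.1 ((specB_contains3412 S).mpr (Or.inl hμ)),
       fun hμ => s.2.1.2.2 ((specB_contains_rev S).mpr (Or.inl hμ))⟩,
     ⟨tlOf M T s.1, (specB_involutive' S s.2.1.1).2,
       fun hτ => s.2.1.2.1 ((specB_contains3412 S).mpr (Or.inr hτ)),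
       fun hτ => s.2.1.2.2 ((specB_contains_rev S).mpr (Or.inr hτ))⟩)
  invFun := fun p =>
    ⟨glueB M T p.1.1 p.2.1,
      ⟨specB_involutive (specB_glue p.1.1 p.2.1) p.1.2.1 p.2.2.1,
       fun h => ((specB_contains3412 (specB_glue p.1.1 p.2.1)).mp h).elim p.1.2.2.1 p.2.2.2.1,
       fun h => ((specB_contains_rev (specB_glue p.1.1 p.2.1)).mp h).elim p.1.2.2.2 p.2.2.2.2⟩,
      (specB_glue p.1.1 p.2.1).1⟩
  left_inv := fun s =>
    Subtype.ext (specB_unique (specB_glue _ _) (specB_of s.1 s.2.1.1 s.2.1.2.1 s.2.2))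
  right_inv := fun p => by
    have h1 : midOf M T (glueB M T p.1.1 p.2.1) = p.1.1 := midOf_eq (specB_glue _ _)
    have h2 : tlOf M T (glueB M T p.1.1 p.2.1) = p.2.1 := tlOf_eq (specB_glue _ _)
    exact Prod.ext (Subtype.ext h1) (Subtype.ext h2)

def equiv0 (k N : ℕ) :
    {π : Fin (N + 1) → Fin (N + 1) // IA k (N + 1) π ∧ (π 0 : ℕ) = 0} ≃
      {ρ : Fin N → Fin N // IA k N ρ} where
  toFun := fun s =>
    have S := spec0_of s.1 s.2.1.1 s.2.2
    ⟨rhoOf N s.1, spec0_involutive' S s.2.1.1,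
      fun hρ => s.2.1.2.1 ((spec0_contains3412 S).mpr hρ),
      fun hρ => s.2.1.2.2 ((spec0_contains_rev S).mpr hρ)⟩
  invFun := fun r =>
    ⟨glue0 N r.1,
      ⟨spec0_involutive (spec0_glue r.1) r.2.1,
       fun h => r.2.2.1 ((spec0_contains3412 (spec0_glue r.1)).mp h),
       fun h => r.2.2.2 ((spec0_contains_rev (spec0_glue r.1)).mp h)⟩,
      (spec0_glue r.1).1⟩
  left_inv := fun s =>
    Subtype.ext (spec0_unique (spec0_glue _) (spec0_of s.1 s.2.1.1 s.2.2))
  right_inv := fun r => Subtype.ext (rhoOf_eq (spec0_glue r.1))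

lemma card_sigma_fin {n : ℕ} (f : Fin n → Type) [∀ i, Finite (f i)] :
    Nat.card ((i : Fin n) × f i) = ∑ i, Nat.card (f i) := by
  letI : ∀ i, Fintype (f i) := fun i => Fintype.ofFinite _
  rw [Nat.card_eq_fintype_card, Fintype.card_sigma]
  exact Finset.sum_congr rfl fun i _ => (Nat.card_eq_fintype_card).symm

lemma cardB (k M T : ℕ) :
    Nat.card {π : Fin (M + T + 2) → Fin (M + T + 2) //
      IA (k + 1) (M + T + 2) π ∧ (π (c0 M T) : ℕ) = M + 1} = cA k M * cA (k + 1) T := by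
  rw [Nat.card_congr (equivB k M T), Nat.card_prod]
  rfl

lemma cardB' (k n M T : ℕ) (h : n = M + T + 2) :
    Nat.card {π : Fin n → Fin n //
      IA (k + 1) n π ∧ (π ⟨0, by omega⟩ : ℕ) = M + 1} = cA k M * cA (k + 1) T := by
  subst h
  exact cardB k M T

lemma card0 (k N : ℕ) :
    Nat.card {π : Fin (N + 1) → Fin (N + 1) // IA k (N + 1) π ∧ (π 0 : ℕ) = 0} = cA k N :=
  Nat.card_congr (equiv0 k N)

lemma fiber_succ (k N : ℕ) (j : Fin N) :
    Nat.card {π : Fin (N + 1) → Fin (N + 1) //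
        IA (k + 1) (N + 1) π ∧ π 0 = Fin.succ j} =
      cA k (j : ℕ) * cA (k + 1) (N - 1 - (j : ℕ)) := by
  have hj := j.isLt
  have hEq : N + 1 = (j : ℕ) + (N - 1 - (j : ℕ)) + 2 := by omega
  rw [← cardB' k (N + 1) (j : ℕ) (N - 1 - (j : ℕ)) hEq]
  refine Nat.card_congr (Equiv.subtypeEquivRight ?_)
  intro π
  rw [and_congr_right_iff]
  intro _
  rw [Fin.ext_iff]
  have hz : ((⟨0, by omega⟩ : Fin (N + 1))) = (0 : Fin (N + 1)) := Fin.ext (by simp)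
  rw [hz]
  simp

lemma recurrence (k N : ℕ) :
    cA (k + 1) (N + 1) =
      cA (k + 1) N + ∑ j : Fin N, cA k (j : ℕ) * cA (k + 1) (N - 1 - (j : ℕ)) := by
  classical
  have h1 : cA (k + 1) (N + 1) =
      ∑ j : Fin (N + 1), Nat.card {π : Fin (N + 1) → Fin (N + 1) //
        IA (k + 1) (N + 1) π ∧ π 0 = j} := by
    rw [cA, Nat.card_congr (Equiv.sigmaFiberEquiv
      (fun s : {π : Fin (N + 1) → Fin (N + 1) // IA (k + 1) (N + 1) π} => s.1 0)).symm,
      card_sigma_fin]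
    refine Finset.sum_congr rfl fun j _ => ?_
    exact Nat.card_congr
      (Equiv.subtypeSubtypeEquivSubtypeInter (IA (k + 1) (N + 1)) (fun π => π 0 = j))
  rw [h1, Fin.sum_univ_succ]
  congr 1
  · rw [← card0 (k + 1) N]
    refine Nat.card_congr (Equiv.subtypeEquivRight ?_)
    intro π
    rw [and_congr_right_iff]
    intro _
    rw [Fin.ext_iff]
    simp
  · exact Finset.sum_congr rfl fun j _ => fiber_succ k N j

lemma cA_zero_left (n : ℕ) : cA 0 n = 0 := by
  have : IsEmpty {π : Fin n → Fin n // IA 0 n π} := by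
    constructor
    rintro ⟨π, -, -, hrev⟩
    exact hrev ⟨fun i => absurd i.isLt (by omega), fun a b _ => absurd a.isLt (by omega),
      fun a b => absurd a.isLt (by omega)⟩
  exact Nat.card_of_isEmpty

lemma cA_zero_right (k : ℕ) : cA (k + 1) 0 = 1 := by
  haveI : Unique {π : Fin 0 → Fin 0 // IA (k + 1) 0 π} := by
    refine ⟨⟨⟨fun i => i.elim0, ?_, ?_, ?_⟩⟩, ?_⟩
    · intro i; exact i.elim0
    · rintro ⟨f, -, -⟩; exact (f ⟨0, by omega⟩).elim0
    · rintro ⟨f, -, -⟩; exact (f ⟨0, by omega⟩).elim0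
    · rintro ⟨π, -⟩
      refine Subtype.ext (funext fun i => i.elim0)
  exact Nat.card_unique

/-! ### Power series -/

open PowerSeries

noncomputable def q (k : ℕ) : PowerSeries ℚ := PowerSeries.mk fun n => (cA k n : ℚ)

lemma q_zero : q 0 = 0 := by
  ext n
  simp [q, cA_zero_left]

lemma q_ident (k : ℕ) :
    q (k + 1) = 1 + PowerSeries.X * q (k + 1) + PowerSeries.X ^ 2 * (q k * q (k + 1)) := by
  ext n
  rw [show (PowerSeries.coeff n) (q (k+1)) = (cA (k+1) n : ℚ) from by
    simp only [q, PowerSeries.coeff_mk]]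
  rw [map_add, map_add]
  match n with
  | 0 =>
    simp [cA_zero_right]
  | 1 =>
    rw [PowerSeries.coeff_one]
    rw [PowerSeries.coeff_succ_X_mul]
    rw [PowerSeries.coeff_X_pow_mul']
    simp only [if_neg (by omega : ¬ (1 = 0)), if_neg (by omega : ¬ (2 ≤ 1))]
    have := recurrence k 0
    simp at this
    rw [this]
    simp only [q, PowerSeries.coeff_mk]
    push_cast
    ring
  | (m + 2) =>
    rw [PowerSeries.coeff_one]
    rw [show m + 2 = (m + 1) + 1 from rfl, PowerSeries.coeff_succ_X_mul]
    rw [show (m + 1) + 1 = m + 2 from rfl, PowerSeries.coeff_X_pow_mul]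
    rw [PowerSeries.coeff_mul]
    have hrec := recurrence k (m + 1)
    have hcast : (cA (k + 1) (m + 2) : ℚ) =
        (cA (k + 1) (m + 1) : ℚ) +
          ∑ j : Fin (m + 1), (cA k (j : ℕ) : ℚ) * (cA (k + 1) (m - (j : ℕ)) : ℚ) := by
      rw [hrec]
      push_cast
      refine congrArg _ ?_
      refine Finset.sum_congr rfl fun j _ => ?_
      norm_num
    rw [hcast]
    simp only [q, PowerSeries.coeff_mk]
    rw [Finset.Nat.sum_antidiagonal_eq_sum_range_succ_mk]
    rw [← Fin.sum_univ_eq_sum_range (fun i => (cA k i : ℚ) * (cA (k + 1) (m - i) : ℚ)) (m + 1)]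
    simp only [if_neg (by omega : ¬ (m + 2 = 0))]
    ring

lemma funceq (k : ℕ) :
    q (k + 1) * (1 - PowerSeries.X - PowerSeries.X ^ 2 * q k) = 1 := by
  have h := q_ident k
  linear_combination h

lemma pQ_succ_succ (n : ℕ) :
    pQ (n + 2) = (1 - PowerSeries.X) * pQ (n + 1) - PowerSeries.X ^ 2 * pQ n := rfl

lemma main_ind : ∀ k : ℕ, q (k + 1) * pQ (k + 1) = pQ k := by
  intro k
  induction k with
  | zero =>
    have h := funceq 0
    rw [q_zero] at h
    show q 1 * pQ 1 = pQ 0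
    rw [show pQ 1 = 1 - PowerSeries.X from rfl, show pQ 0 = 1 from rfl]
    linear_combination h
  | succ n ih =>
    have h := funceq (n + 1)
    rw [pQ_succ_succ]
    linear_combination pQ (n + 1) * h + PowerSeries.X ^ 2 * q (n + 2) * ih

end Stmt6

/-- for `k ≥ 1`, `F_{2k…21}(x) · p_k(x) = p_{k-1}(x)` as formal power series
over `ℚ`, where `2k…21` is the decreasing permutation of length `2k` (here `Fin.rev`). -/
theorem stmt6 (k : ℕ) (hk : 1 ≤ k) :
    F (Fin.rev : Fin (2 * k) → Fin (2 * k)) * pQ k = pQ (k - 1) := by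
  match k, hk with
  | (k' + 1), _ =>
    have hF : F (Fin.rev : Fin (2 * (k' + 1)) → Fin (2 * (k' + 1))) = Stmt6.q (k' + 1) := rfl
    rw [hF, show k' + 1 - 1 = k' from rfl]
    exact Stmt6.main_ind k'
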